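/- Let M > 0 and let (λ_n), (α_n) be spectral data in the class Ω_{0,M}. Then the series defining F(x,y) converges for every (x,y) ∈ [0,π]², and for every N ≥ 1: ‖F_N − F‖_{L^∞([0,π]²)} ≤ C_M^{(1)} · N^{−1/2}, where C_M^{(1)} := M·cosh(2πM)·[ (8π²/√6 + 2π)·M + 5 ]. -/

import Mathlib

private lemma normCosLe (z : ℂ) : ‖Complex.cos z‖ ≤ Real.cosh z.im := by
  have h1 : ‖Complex.exp (z * Complex.I)‖ = Real.exp (-z.im) := by
    rw [Complex.norm_exp, Complex.mul_I_re]
  have h2 : ‖Complex.exp (-z * Complex.I)‖ = Real.exp z.im := by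
    rw [Complex.norm_exp]
    simp
  have h3 : ‖Complex.exp (z * Complex.I) + Complex.exp (-z * Complex.I)‖
      ≤ Real.exp (-z.im) + Real.exp z.im := by
    rw [← h1, ← h2]; exact norm_add_le _ _
  rw [Complex.cos, Real.cosh_eq, norm_div]
  have : ‖(2 : ℂ)‖ = 2 := by norm_num
  rw [this]
  linarith
private lemma normSinLe (z : ℂ) : ‖Complex.sin z‖ ≤ Real.cosh z.im := by
  have h1 : ‖Complex.exp (z * Complex.I)‖ = Real.exp (-z.im) := by
    rw [Complex.norm_exp, Complex.mul_I_re]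
  have h2 : ‖Complex.exp (-z * Complex.I)‖ = Real.exp z.im := by
    rw [Complex.norm_exp]
    simp
  have h3 : ‖Complex.exp (-z * Complex.I) - Complex.exp (z * Complex.I)‖
      ≤ Real.exp (-z.im) + Real.exp z.im := by
    rw [← h1, ← h2]
    exact (norm_sub_le _ _).trans (by linarith [norm_nonneg (Complex.exp (z*Complex.I)), norm_nonneg (Complex.exp (-z*Complex.I))])
  rw [Complex.sin, Real.cosh_eq, norm_div, norm_mul, Complex.norm_I, mul_one]
  have : ‖(2 : ℂ)‖ = 2 := by norm_num
  rw [this]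
  linarith

private lemma cosLip {c : ℝ} (hc : 0 ≤ c) {a b : ℂ} (ha : |a.im| ≤ c) (hb : |b.im| ≤ c) :
    ‖Complex.cos a - Complex.cos b‖ ≤ Real.cosh c * ‖a - b‖ := by
  have hs : Convex ℝ {z : ℂ | |z.im| ≤ c} := by
    have h : {z : ℂ | |z.im| ≤ c} = Complex.imLm ⁻¹' Set.Icc (-c) c := by
      ext z; simp [abs_le, Complex.imLm]
    rw [h]
    exact (convex_Icc _ _).linear_preimage _
  exact hs.norm_image_sub_le_of_norm_hasDerivWithin_le
    (f' := fun z => -Complex.sin z)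
    (fun z _ => (Complex.hasDerivAt_cos z).hasDerivWithinAt)
    (fun z hz => by
      rw [norm_neg]
      refine (normSinLe z).trans ?_
      rw [← Real.cosh_abs]
      exact Real.cosh_le_cosh.2 (by rwa [abs_abs, abs_of_nonneg hc]))
    hb ha

private lemma tsumCS (f g : ℕ → ℝ) (hf0 : ∀ n, 0 ≤ f n) (hg0 : ∀ n, 0 ≤ g n)
    (hf : Summable fun n => f n ^ 2) (hg : Summable fun n => g n ^ 2) :
    Summable (fun n => f n * g n) ∧
      ∑' n, f n * g n ≤ Real.sqrt (∑' n, f n ^ 2) * Real.sqrt (∑' n, g n ^ 2) := by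
  have hsum : Summable fun n => f n * g n := by
    refine Summable.of_nonneg_of_le (fun n => mul_nonneg (hf0 n) (hg0 n))
      (fun n => ?_) ((hf.add hg).div_const 2)
    have := two_mul_le_add_sq (f n) (g n)
    show f n * g n ≤ (f n ^ 2 + g n ^ 2) / 2
    linarith
  refine ⟨hsum, Summable.tsum_le_of_sum_le hsum fun s => ?_⟩
  refine (Real.sum_mul_le_sqrt_mul_sqrt s f g).trans ?_
  gcongr
  · exact Summable.sum_le_tsum s (fun i _ => sq_nonneg _) hf
  · exact Summable.sum_le_tsum s (fun i _ => sq_nonneg _) hg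

private lemma tailInvSq (N : ℕ) (hN : 1 ≤ N) :
    Summable (fun i : ℕ => (((i : ℝ) + N + 2)⁻¹) ^ 2) ∧
      ∑' i : ℕ, (((i : ℝ) + N + 2)⁻¹) ^ 2 ≤ ((N : ℝ))⁻¹ := by
  have hpos1 : ∀ i : ℕ, (0:ℝ) < (i : ℝ) + N + 1 := fun i => by positivity
  have hpos2 : ∀ i : ℕ, (0:ℝ) < (i : ℝ) + N + 2 := fun i => by positivity
  have hle : ∀ i : ℕ, (((i : ℝ) + N + 2)⁻¹) ^ 2 ≤ ((i : ℝ) + N + 1)⁻¹ - ((i : ℝ) + N + 2)⁻¹ := by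
    intro i
    have h1 := hpos1 i; have h2 := hpos2 i
    have key : ((i : ℝ) + N + 1)⁻¹ - ((i : ℝ) + N + 2)⁻¹
        = ((i:ℝ)+N+1)⁻¹ * ((i:ℝ)+N+2)⁻¹ := by
      field_simp
      ring
    rw [key, pow_two]
    gcongr
    linarith
  have hd0 : ∀ i : ℕ, (0:ℝ) ≤ ((i : ℝ) + N + 1)⁻¹ - ((i : ℝ) + N + 2)⁻¹ := by
    intro i
    have h1 := hpos1 i; have h2 := hpos2 i
    rw [sub_nonneg]
    gcongr
    linarith
  have hpsum : ∀ n : ℕ, ∑ i ∈ Finset.range n,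
      (((i : ℝ) + N + 1)⁻¹ - ((i : ℝ) + N + 2)⁻¹) ≤ ((N:ℝ)+1)⁻¹ := by
    intro n
    have htel := Finset.sum_range_sub' (f := fun i : ℕ => ((i : ℝ) + N + 1)⁻¹) n
    have heq : ∀ i : ℕ, ((i : ℝ) + N + 1)⁻¹ - ((i : ℝ) + N + 2)⁻¹
        = (fun i : ℕ => ((i : ℝ) + N + 1)⁻¹) i
          - (fun i : ℕ => ((i : ℝ) + N + 1)⁻¹) (i + 1) := by
      intro i; push_cast; ring_nf
    rw [Finset.sum_congr rfl (fun i _ => heq i), htel]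
    simp only [Nat.cast_zero, zero_add]
    have : (0:ℝ) ≤ ((n : ℝ) + N + 1)⁻¹ := by positivity
    linarith
  have hdsum : Summable (fun i : ℕ => ((i : ℝ) + N + 1)⁻¹ - ((i : ℝ) + N + 2)⁻¹) :=
    summable_of_sum_range_le hd0 hpsum
  have hsum : Summable (fun i : ℕ => (((i : ℝ) + N + 2)⁻¹) ^ 2) :=
    Summable.of_nonneg_of_le (fun i => sq_nonneg _) hle hdsum
  refine ⟨hsum, ?_⟩
  have h1 : ∑' i : ℕ, (((i : ℝ) + N + 2)⁻¹) ^ 2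
      ≤ ∑' i : ℕ, (((i : ℝ) + N + 1)⁻¹ - ((i : ℝ) + N + 2)⁻¹) := Summable.tsum_le_tsum hle hsum hdsum
  have h2 : ∑' i : ℕ, (((i : ℝ) + N + 1)⁻¹ - ((i : ℝ) + N + 2)⁻¹) ≤ ((N:ℝ)+1)⁻¹ :=
    Summable.tsum_le_of_sum_range_le hdsum hpsum
  have h3 : ((N:ℝ)+1)⁻¹ ≤ ((N:ℝ))⁻¹ := by
    have : (0:ℝ) < N := by exact_mod_cast hN
    gcongr
    linarith
  linarith

open MeasureTheory
open scoped ENNReal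

set_option maxHeartbeats 1000000 in
/-- For spectral data in the class `Ω_{0,M}`, the series defining the
Gel'fand–Levitan data kernel `F` converges on `[0,π]²`, and the truncations
satisfy `‖F_N − F‖_∞ ≤ C_M^{(1)} N^{−1/2}` with
`C_M^{(1)} = M cosh(2πM)[(8π²/√6 + 2π)M + 5]`. -/
theorem stmt13 (M : ℝ) (hM : 0 < M)
    (lam α : ℕ → ℝ) (hα : ∀ n, 0 < α n)
    (ρ κ : ℕ → ℂ) (κt : ℕ → ℝ)
    (hρsq : ∀ n, (ρ n) ^ 2 = ((lam n : ℝ) : ℂ))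
    (hρre : ∀ n, 0 ≤ (ρ n).re)
    (hρ : ∀ n : ℕ, ρ n = (n : ℂ) + κ n / ((n : ℂ) + 1))
    (hαn : ∀ n : ℕ, 1 / α n = 2 / Real.pi + κt n / ((n : ℝ) + 1))
    (hκsum : Summable fun n => ‖κ n‖ ^ 2) (hκM : ∑' n, ‖κ n‖ ^ 2 ≤ M ^ 2)
    (hκtsum : Summable fun n => (κt n) ^ 2) (hκtM : ∑' n, (κt n) ^ 2 ≤ M ^ 2)
    -- `G n t = cos(ρ_n t)` (real-valued since `ρ_n² ∈ ℝ`):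
    (G : ℕ → ℝ → ℝ) (hG : ∀ n t, G n t = (Complex.cos (ρ n * (t : ℂ))).re)
    -- the `n`-th summand of the series defining `F`:
    (term : ℕ → ℝ → ℝ → ℝ)
    (hterm : ∀ n x y, term n x y =
      (1 / α n) * G n x * G n y -
        (2 / Real.pi) * Real.cos (n * x) * Real.cos (n * y))
    (F : ℝ → ℝ → ℝ)
    (hF : ∀ x y, F x y =
      (1 / α 0) * G 0 x * G 0 y - 1 / Real.pi + ∑' n : ℕ, term (n + 1) x y)
    (FN : ℕ → ℝ → ℝ → ℝ)
    (hFN : ∀ N x y, FN N x y =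
      (1 / α 0) * G 0 x * G 0 y - 1 / Real.pi +
        ∑ n ∈ Finset.range N, term (n + 1) x y)
    (C1 : ℝ)
    (hC1 : C1 = M * Real.cosh (2 * Real.pi * M) *
      ((8 * Real.pi ^ 2 / Real.sqrt 6 + 2 * Real.pi) * M + 5)) :
    (∀ x ∈ Set.Icc (0 : ℝ) Real.pi, ∀ y ∈ Set.Icc (0 : ℝ) Real.pi,
      Summable fun n : ℕ => term (n + 1) x y) ∧
    (∀ N : ℕ, 1 ≤ N → ∀ x ∈ Set.Icc (0 : ℝ) Real.pi, ∀ y ∈ Set.Icc (0 : ℝ) Real.pi,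
      |FN N x y - F x y| ≤ C1 * (N : ℝ) ^ (-(1 : ℝ) / 2)) := by
  have hπ := Real.pi_pos
  set c := Real.cosh (Real.pi * M) with hc
  have hc1 : 1 ≤ c := Real.one_le_cosh _
  have hc0 : (0:ℝ) < c := lt_of_lt_of_le one_pos hc1
  have hκle : ∀ n, ‖κ n‖ ≤ M := by
    intro n
    have h := Summable.le_tsum hκsum n (fun m _ => sq_nonneg _)
    nlinarith [norm_nonneg (κ n), hκM]
  have hden : ∀ m : ℕ, (0:ℝ) < (m:ℝ) + 1 := fun m => by positivity
  have hnormden : ∀ m : ℕ, ‖((m:ℂ) + 1)‖ = (m:ℝ) + 1 := by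
    intro m
    have h : ((m:ℂ) + 1) = (((m:ℝ) + 1 : ℝ) : ℂ) := by push_cast; ring
    rw [h, Complex.norm_real, Real.norm_eq_abs, abs_of_pos (hden m)]
  have hρdiff : ∀ m : ℕ, ‖ρ m - (m:ℂ)‖ = ‖κ m‖ / ((m:ℝ) + 1) := by
    intro m
    rw [hρ m]
    simp only [add_sub_cancel_left]
    rw [norm_div, hnormden]
  have hρim : ∀ m : ℕ, |(ρ m).im| ≤ ‖κ m‖ / ((m:ℝ) + 1) := by
    intro m
    have h1 : |(ρ m - (m:ℂ)).im| ≤ ‖ρ m - (m:ℂ)‖ := by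
      exact Complex.abs_im_le_norm _
    have h2 : (ρ m - (m:ℂ)).im = (ρ m).im := by simp
    rw [h2] at h1
    rw [← hρdiff m]; exact h1
  have hκdiv : ∀ m : ℕ, ‖κ m‖ / ((m:ℝ)+1) ≤ M := by
    intro m
    have h1 := hκle m
    rw [div_le_iff₀ (hden m)]
    nlinarith [norm_nonneg (κ m), (hden m), Nat.cast_nonneg (α := ℝ) m]
  have himt : ∀ m : ℕ, ∀ t ∈ Set.Icc (0:ℝ) Real.pi, |(ρ m * (t:ℂ)).im| ≤ Real.pi * M := by
    intro m t ht
    have him : (ρ m * (t:ℂ)).im = (ρ m).im * t := by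
      simp [Complex.mul_im]
    rw [him, abs_mul, abs_of_nonneg ht.1]
    calc |(ρ m).im| * t ≤ M * Real.pi :=
          mul_le_mul ((hρim m).trans (hκdiv m)) ht.2 ht.1 hM.le
      _ = Real.pi * M := by ring
  have hGb : ∀ m : ℕ, ∀ t ∈ Set.Icc (0:ℝ) Real.pi, |G m t| ≤ c := by
    intro m t ht
    rw [hG]
    calc |(Complex.cos (ρ m * (t:ℂ))).re| ≤ ‖Complex.cos (ρ m * (t:ℂ))‖ := by
          exact Complex.abs_re_le_norm _
      _ ≤ Real.cosh ((ρ m * (t:ℂ)).im) := normCosLe _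
      _ ≤ c := by
          rw [hc, ← Real.cosh_abs ((ρ m * (t:ℂ)).im)]
          refine Real.cosh_le_cosh.2 ?_
          rw [abs_abs]
          exact (himt m t ht).trans (le_abs_self _)
  have hGd : ∀ m : ℕ, ∀ t ∈ Set.Icc (0:ℝ) Real.pi,
      |G m t - Real.cos (m * t)| ≤ c * (Real.pi * (‖κ m‖ / ((m:ℝ) + 1))) := by
    intro m t ht
    have hcos : Real.cos ((m:ℝ) * t) = (Complex.cos ((((m:ℝ) * t : ℝ)) : ℂ)).re := by
      rw [Complex.cos_ofReal_re]
    rw [hG, hcos]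
    have hre : (Complex.cos (ρ m * (t:ℂ))).re - (Complex.cos ((((m:ℝ)*t : ℝ)):ℂ)).re
        = (Complex.cos (ρ m * (t:ℂ)) - Complex.cos ((((m:ℝ)*t : ℝ)):ℂ)).re := by
      simp [Complex.sub_re]
    rw [hre]
    have hnd : ‖ρ m * (t:ℂ) - (((m:ℝ)*t:ℝ):ℂ)‖ ≤ Real.pi * (‖κ m‖ / ((m:ℝ) + 1)) := by
      have hcast : ((((m:ℝ)*t : ℝ)):ℂ) = (m:ℂ) * (t:ℂ) := by push_cast; ring
      rw [hcast, show ρ m * (t:ℂ) - (m:ℂ)*(t:ℂ) = (ρ m - (m:ℂ)) * (t:ℂ) by ring,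
        norm_mul, hρdiff m, Complex.norm_real, Real.norm_eq_abs, abs_of_nonneg ht.1]
      calc ‖κ m‖ / ((m:ℝ)+1) * t ≤ ‖κ m‖ / ((m:ℝ)+1) * Real.pi :=
            mul_le_mul_of_nonneg_left ht.2 (by positivity)
        _ = Real.pi * (‖κ m‖ / ((m:ℝ)+1)) := by ring
    calc |(Complex.cos (ρ m * (t:ℂ)) - Complex.cos ((((m:ℝ)*t:ℝ)):ℂ)).re|
        ≤ ‖Complex.cos (ρ m * (t:ℂ)) - Complex.cos ((((m:ℝ)*t:ℝ)):ℂ)‖ := by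
          exact Complex.abs_re_le_norm _
      _ ≤ Real.cosh (Real.pi * M) * ‖ρ m * (t:ℂ) - (((m:ℝ)*t:ℝ):ℂ)‖ := by
          refine cosLip (by positivity) (himt m t ht) ?_
          simp
          positivity
      _ ≤ c * (Real.pi * (‖κ m‖ / ((m:ℝ) + 1))) := by
          rw [← hc]
          exact mul_le_mul_of_nonneg_left hnd hc0.le
  -- key termwise bound
  have htermb : ∀ m : ℕ, ∀ x ∈ Set.Icc (0:ℝ) Real.pi, ∀ y ∈ Set.Icc (0:ℝ) Real.pi,
      |term m x y| ≤ c^2 * (|κt m| + 4*‖κ m‖) / ((m:ℝ)+1) := by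
    intro m x hx y hy
    have e1 := hGb m x hx
    have e2 := hGb m y hy
    have e3 := hGd m x hx
    have e4 := hGd m y hy
    have e5 : |Real.cos ((m:ℝ) * y)| ≤ 1 := Real.abs_cos_le_one _
    have hκ0 : (0:ℝ) ≤ ‖κ m‖ := norm_nonneg _
    have hd := hden m
    have hu : (0:ℝ) ≤ ‖κ m‖ / ((m:ℝ)+1) := by positivity
    have hv : (0:ℝ) ≤ |κt m| / ((m:ℝ)+1) := by positivity
    rw [hterm, hαn m]
    have hid : (2/Real.pi + κt m/((m:ℝ)+1)) * G m x * G m y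
        - 2/Real.pi * Real.cos ((m:ℝ)*x) * Real.cos ((m:ℝ)*y)
        = (κt m/((m:ℝ)+1)) * (G m x * G m y)
          + (2/Real.pi) * (G m x * (G m y - Real.cos ((m:ℝ)*y))
              + Real.cos ((m:ℝ)*y) * (G m x - Real.cos ((m:ℝ)*x))) := by ring
    rw [hid]
    have h7 : |(κt m/((m:ℝ)+1)) * (G m x * G m y)| ≤ |κt m|/((m:ℝ)+1) * (c*c) := by
      rw [abs_mul, abs_mul, abs_div, abs_of_pos hd]
      gcongr
    have h8 : |(2/Real.pi) * (G m x * (G m y - Real.cos ((m:ℝ)*y))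
          + Real.cos ((m:ℝ)*y) * (G m x - Real.cos ((m:ℝ)*x)))|
        ≤ (2/Real.pi) * (c * (c * (Real.pi * (‖κ m‖/((m:ℝ)+1))))
            + 1 * (c * (Real.pi * (‖κ m‖/((m:ℝ)+1))))) := by
      rw [abs_mul, abs_of_pos (by positivity : (0:ℝ) < 2/Real.pi)]
      gcongr 2/Real.pi * ?_
      calc |G m x * (G m y - Real.cos ((m:ℝ)*y))
            + Real.cos ((m:ℝ)*y) * (G m x - Real.cos ((m:ℝ)*x))|
          ≤ |G m x| * |G m y - Real.cos ((m:ℝ)*y)|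
            + |Real.cos ((m:ℝ)*y)| * |G m x - Real.cos ((m:ℝ)*x)| := by
            refine (abs_add_le _ _).trans ?_
            rw [abs_mul, abs_mul]
        _ ≤ c * (c * (Real.pi * (‖κ m‖/((m:ℝ)+1))))
            + 1 * (c * (Real.pi * (‖κ m‖/((m:ℝ)+1)))) := by
            gcongr <;> first
              | exact e1 | exact e4 | exact e3 | exact e5
              | exact abs_nonneg _ | positivity
    have key : (2/Real.pi) * (c * (c * (Real.pi * (‖κ m‖/((m:ℝ)+1))))
          + 1 * (c * (Real.pi * (‖κ m‖/((m:ℝ)+1)))))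
        = 2*c^2*(‖κ m‖/((m:ℝ)+1)) + 2*c*(‖κ m‖/((m:ℝ)+1)) := by
      field_simp
    have hRHS : c^2 * (|κt m| + 4*‖κ m‖) / ((m:ℝ)+1)
        = c^2 * (|κt m|/((m:ℝ)+1)) + 4*c^2*(‖κ m‖/((m:ℝ)+1)) := by
      field_simp
    calc |(κt m/((m:ℝ)+1)) * (G m x * G m y)
          + (2/Real.pi) * (G m x * (G m y - Real.cos ((m:ℝ)*y))
              + Real.cos ((m:ℝ)*y) * (G m x - Real.cos ((m:ℝ)*x)))|
        ≤ |κt m|/((m:ℝ)+1) * (c*c)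
          + (2/Real.pi) * (c * (c * (Real.pi * (‖κ m‖/((m:ℝ)+1))))
              + 1 * (c * (Real.pi * (‖κ m‖/((m:ℝ)+1))))) := by
          refine (abs_add_le _ _).trans ?_
          exact add_le_add h7 h8
      _ ≤ c^2 * (|κt m| + 4*‖κ m‖) / ((m:ℝ)+1) := by
          rw [key, hRHS]
          nlinarith [mul_nonneg (mul_nonneg hc0.le hu) (sub_nonneg.2 hc1)]
  -- summability of the dominating sequence
  have hg2 : Summable (fun m : ℕ => (((m:ℝ)+1)⁻¹)^2) := by
    have h0 : Summable (fun n : ℕ => 1 / (n:ℝ)^2) :=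
      Real.summable_one_div_nat_pow.2 (by norm_num)
    have h1 := (summable_nat_add_iff 1).2 h0
    refine h1.congr fun n => ?_
    push_cast
    rw [one_div, inv_pow]
  have hκtabs2 : Summable (fun m : ℕ => |κt m|^2) := by
    refine hκtsum.congr fun n => ?_
    rw [sq_abs]
  obtain ⟨hA1, -⟩ := tsumCS (fun m => |κt m|) (fun m => ((m:ℝ)+1)⁻¹)
    (fun m => abs_nonneg _) (fun m => by positivity) hκtabs2 hg2
  obtain ⟨hA2, -⟩ := tsumCS (fun m => ‖κ m‖) (fun m => ((m:ℝ)+1)⁻¹)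
    (fun m => norm_nonneg _) (fun m => by positivity) hκsum hg2
  have hAsum : Summable (fun m : ℕ => c^2 * (|κt m| + 4*‖κ m‖) / ((m:ℝ)+1)) := by
    have heq : (fun m : ℕ => c^2 * (|κt m| + 4*‖κ m‖) / ((m:ℝ)+1))
        = fun m : ℕ => c^2 * (|κt m| * ((m:ℝ)+1)⁻¹) + 4*c^2 * (‖κ m‖ * ((m:ℝ)+1)⁻¹) := by
      funext m
      field_simp
    rw [heq]
    exact (hA1.mul_left _).add (hA2.mul_left _)
  have part1 : ∀ x ∈ Set.Icc (0 : ℝ) Real.pi, ∀ y ∈ Set.Icc (0 : ℝ) Real.pi,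
      Summable fun n : ℕ => term (n + 1) x y := by
    intro x hx y hy
    have hAsh := (summable_nat_add_iff
      (f := fun m : ℕ => c^2 * (|κt m| + 4*‖κ m‖) / ((m:ℝ)+1)) 1).2 hAsum
    refine Summable.of_norm_bounded hAsh ?_
    intro n
    rw [Real.norm_eq_abs]
    exact htermb (n+1) x hx y hy
  refine ⟨part1, ?_⟩
  intro N hN x hx y hy
  have hf : Summable (fun n : ℕ => term (n + 1) x y) := part1 x hx y hy
  have hkey := Summable.sum_add_tsum_nat_add (f := fun n : ℕ => term (n + 1) x y) N hf
  have hdiff : FN N x y - F x y = -(∑' i : ℕ, term (i + N + 1) x y) := by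
    rw [hFN, hF]
    have : (∑' i : ℕ, term (i + N + 1) x y) = ∑' i : ℕ, term ((i + N) + 1) x y := by
      congr 1
    rw [this, ← hkey]
    ring
  rw [hdiff, abs_neg]
  -- tail estimates
  obtain ⟨hg2N, hg2Nle⟩ := tailInvSq N hN
  have hκtsh : Summable (fun i : ℕ => |κt (i + (N+1))|^2) := by
    refine ((summable_nat_add_iff (N+1)).2 hκtsum).congr fun n => ?_
    rw [sq_abs]
  have hκsh : Summable (fun i : ℕ => ‖κ (i + (N+1))‖^2) :=
    (summable_nat_add_iff (N+1)).2 hκsum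
  have hκtshle : ∑' i : ℕ, |κt (i + (N+1))|^2 ≤ M^2 := by
    have h := Summable.sum_add_tsum_nat_add (f := fun n => (κt n)^2) (N+1) hκtsum
    have hpos : (0:ℝ) ≤ ∑ i ∈ Finset.range (N+1), (κt i)^2 :=
      Finset.sum_nonneg fun i _ => sq_nonneg _
    have heq : ∑' i : ℕ, |κt (i + (N+1))|^2 = ∑' i : ℕ, (κt (i + (N+1)))^2 := by
      congr 1; funext i; rw [sq_abs]
    rw [heq]
    linarith
  have hκshle : ∑' i : ℕ, ‖κ (i + (N+1))‖^2 ≤ M^2 := by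
    have h := Summable.sum_add_tsum_nat_add (f := fun n => ‖κ n‖^2) (N+1) hκsum
    have hpos : (0:ℝ) ≤ ∑ i ∈ Finset.range (N+1), ‖κ i‖^2 :=
      Finset.sum_nonneg fun i _ => sq_nonneg _
    linarith
  obtain ⟨hT1sum, hT1⟩ := tsumCS (fun i => |κt (i + (N+1))|) (fun i => ((i:ℝ)+N+2)⁻¹)
    (fun i => abs_nonneg _) (fun i => by positivity) hκtsh hg2N
  obtain ⟨hT2sum, hT2⟩ := tsumCS (fun i => ‖κ (i + (N+1))‖) (fun i => ((i:ℝ)+N+2)⁻¹)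
    (fun i => norm_nonneg _) (fun i => by positivity) hκsh hg2N
  have hsqN : Real.sqrt ((N:ℝ)⁻¹) = (N:ℝ) ^ (-(1:ℝ)/2) := by
    rw [neg_div, Real.rpow_neg (Nat.cast_nonneg N), Real.sqrt_inv, Real.sqrt_eq_rpow]
  have hsq0 : (0:ℝ) ≤ Real.sqrt ((N:ℝ)⁻¹) := Real.sqrt_nonneg _
  have hT1' : ∑' i : ℕ, |κt (i + (N+1))| * ((i:ℝ)+N+2)⁻¹ ≤ M * Real.sqrt ((N:ℝ)⁻¹) := by
    refine hT1.trans ?_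
    have s1 : Real.sqrt (∑' i : ℕ, |κt (i + (N+1))|^2) ≤ M := by
      refine Real.sqrt_le_sqrt hκtshle |>.trans ?_
      rw [Real.sqrt_sq hM.le]
    have s2 : Real.sqrt (∑' i : ℕ, (((i:ℝ)+N+2)⁻¹)^2) ≤ Real.sqrt ((N:ℝ)⁻¹) :=
      Real.sqrt_le_sqrt hg2Nle
    exact mul_le_mul s1 s2 (Real.sqrt_nonneg _) hM.le
  have hT2' : ∑' i : ℕ, ‖κ (i + (N+1))‖ * ((i:ℝ)+N+2)⁻¹ ≤ M * Real.sqrt ((N:ℝ)⁻¹) := by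
    refine hT2.trans ?_
    have s1 : Real.sqrt (∑' i : ℕ, ‖κ (i + (N+1))‖^2) ≤ M := by
      refine Real.sqrt_le_sqrt hκshle |>.trans ?_
      rw [Real.sqrt_sq hM.le]
    have s2 : Real.sqrt (∑' i : ℕ, (((i:ℝ)+N+2)⁻¹)^2) ≤ Real.sqrt ((N:ℝ)⁻¹) :=
      Real.sqrt_le_sqrt hg2Nle
    exact mul_le_mul s1 s2 (Real.sqrt_nonneg _) hM.le
  -- dominating sequence for the tail
  set B : ℕ → ℝ := fun i => c^2 * (|κt (i + (N+1))| * ((i:ℝ)+N+2)⁻¹)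
      + 4*c^2 * (‖κ (i + (N+1))‖ * ((i:ℝ)+N+2)⁻¹) with hB
  have hBsum : Summable B := (hT1sum.mul_left _).add (hT2sum.mul_left _)
  have habs : ∀ i : ℕ, |term (i + N + 1) x y| ≤ B i := by
    intro i
    refine (htermb (i + N + 1) x hx y hy).trans_eq ?_
    rw [hB]
    have hcast : (((i + N + 1 : ℕ):ℝ)+1) = (i:ℝ)+N+2 := by push_cast; ring
    have hidx : i + N + 1 = i + (N+1) := by omega
    rw [hcast, hidx]
    field_simp
  have hnormsum : Summable (fun i : ℕ => |term (i + N + 1) x y|) :=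
    Summable.of_nonneg_of_le (fun i => abs_nonneg _) habs hBsum
  have step1 : |∑' i : ℕ, term (i + N + 1) x y| ≤ ∑' i : ℕ, |term (i + N + 1) x y| := by
    have := norm_tsum_le_tsum_norm (f := fun i : ℕ => term (i + N + 1) x y)
      (by simpa [Real.norm_eq_abs] using hnormsum)
    simpa [Real.norm_eq_abs] using this
  have step2 : ∑' i : ℕ, |term (i + N + 1) x y| ≤ ∑' i : ℕ, B i :=
    Summable.tsum_le_tsum habs hnormsum hBsum
  have step3 : ∑' i : ℕ, B i
      = c^2 * (∑' i : ℕ, |κt (i + (N+1))| * ((i:ℝ)+N+2)⁻¹)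
        + 4*c^2 * (∑' i : ℕ, ‖κ (i + (N+1))‖ * ((i:ℝ)+N+2)⁻¹) := by
    rw [hB, Summable.tsum_add (hT1sum.mul_left _) (hT2sum.mul_left _), tsum_mul_left, tsum_mul_left]
  have step4 : ∑' i : ℕ, B i ≤ 5 * M * c^2 * Real.sqrt ((N:ℝ)⁻¹) := by
    rw [step3]
    have b1 : c^2 * (∑' i : ℕ, |κt (i + (N+1))| * ((i:ℝ)+N+2)⁻¹)
        ≤ c^2 * (M * Real.sqrt ((N:ℝ)⁻¹)) :=
      mul_le_mul_of_nonneg_left hT1' (by positivity)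
    have b2 : 4*c^2 * (∑' i : ℕ, ‖κ (i + (N+1))‖ * ((i:ℝ)+N+2)⁻¹)
        ≤ 4*c^2 * (M * Real.sqrt ((N:ℝ)⁻¹)) :=
      mul_le_mul_of_nonneg_left hT2' (by positivity)
    nlinarith [sq_nonneg c]
  -- final constant comparison
  have h2c : c^2 ≤ Real.cosh (2 * Real.pi * M) := by
    rw [show 2 * Real.pi * M = 2 * (Real.pi * M) by ring, Real.cosh_two_mul, hc]
    nlinarith [sq_nonneg (Real.sinh (Real.pi * M))]
  have hC1ge : 5 * M * c^2 ≤ C1 := by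
    rw [hC1]
    have hpos : (0:ℝ) ≤ (8 * Real.pi ^ 2 / Real.sqrt 6 + 2 * Real.pi) * M := by positivity
    have f1 : M * c^2 ≤ M * Real.cosh (2 * Real.pi * M) :=
      mul_le_mul_of_nonneg_left h2c hM.le
    have f2 : (0:ℝ) ≤ M * Real.cosh (2 * Real.pi * M)
        * ((8 * Real.pi ^ 2 / Real.sqrt 6 + 2 * Real.pi) * M) :=
      mul_nonneg (mul_nonneg hM.le (Real.cosh_pos (x := 2 * Real.pi * M)).le) hpos
    nlinarith [f1, f2]
  calc |∑' i : ℕ, term (i + N + 1) x y| ≤ 5 * M * c^2 * Real.sqrt ((N:ℝ)⁻¹) := by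
        refine step1.trans (step2.trans step4)
    _ ≤ C1 * Real.sqrt ((N:ℝ)⁻¹) := mul_le_mul_of_nonneg_right hC1ge hsq0
    _ = C1 * (N:ℝ) ^ (-(1:ℝ)/2) := by rw [hsqN]
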